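/- For two bilinear forms graphs Bil_q(n_1,m_1) and Bil_q(n_2,m_2) with t = 2, two eigenvalues θ_{j_1} + θ_{j_2} and θ_{j_1'} + θ_{j_2'} of the Cartesian product (where θ_j^{(i)} = ((q^{n_i−j}−1)(q^{m_i}−q^j) − q^j + 1)/(q−1) and (j_1,j_2) ≠ (j_1',j_2'), 0 ≤ j_i, j_i' ≤ n_i) coincide if and only if n_2 − n_1 + m_2 − m_1 = j_2 − j_1' = j_2' − j_1. -/

import Mathlib

private lemma pow_sum_helper {q a b c d : ℕ} (hq : 2 ≤ q) (hab : a ≤ b) (hcd : c ≤ d)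
    (h : q ^ a + q ^ b = q ^ c + q ^ d) : a = c ∧ b = d := by
  have hq1 : 1 ≤ q := by omega
  have hbd : b = d := by
    by_contra hbd
    rcases lt_or_gt_of_ne hbd with h1 | h1
    · have f1 : q ^ a ≤ q ^ b := Nat.pow_le_pow_right hq1 hab
      have f2 : q ^ (b + 1) ≤ q ^ d := Nat.pow_le_pow_right hq1 (by omega)
      have f3 : 1 ≤ q ^ c := Nat.one_le_pow _ _ (by omega)
      have f4 : q ^ (b + 1) = q ^ b * q := pow_succ q b
      have f5 : q ^ b * 2 ≤ q ^ b * q := Nat.mul_le_mul_left _ hq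
      omega
    · have f1 : q ^ c ≤ q ^ d := Nat.pow_le_pow_right hq1 hcd
      have f2 : q ^ (d + 1) ≤ q ^ b := Nat.pow_le_pow_right hq1 (by omega)
      have f3 : 1 ≤ q ^ a := Nat.one_le_pow _ _ (by omega)
      have f4 : q ^ (d + 1) = q ^ d * q := pow_succ q d
      have f5 : q ^ d * 2 ≤ q ^ d * q := Nat.mul_le_mul_left _ hq
      omega
  subst hbd
  have hac : q ^ a = q ^ c := by omega
  exact ⟨Nat.pow_right_injective hq hac, rfl⟩

private lemma pow_sum_eq_iff {q : ℕ} (hq : 2 ≤ q) (a b c d : ℕ) :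
    q ^ a + q ^ b = q ^ c + q ^ d ↔ (a = c ∧ b = d) ∨ (a = d ∧ b = c) := by
  constructor
  · intro h
    rcases le_total a b with hab | hab <;> rcases le_total c d with hcd | hcd
    · exact Or.inl (pow_sum_helper hq hab hcd h)
    · exact Or.inr (pow_sum_helper hq hab hcd (by omega))
    · obtain ⟨h1, h2⟩ := pow_sum_helper hq hab hcd (by omega)
      exact Or.inr ⟨h2, h1⟩
    · obtain ⟨h1, h2⟩ := pow_sum_helper hq hab hcd (by omega)
      exact Or.inl ⟨h2, h1⟩
  · rintro (⟨rfl, rfl⟩ | ⟨rfl, rfl⟩) <;> omega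

/-- For the Cartesian product of two bilinear forms graphs `Bil_q(n₁,m₁)` and
`Bil_q(n₂,m₂)`, two eigenvalues `θ_{j₁} + θ_{j₂}` and `θ_{j₁'} + θ_{j₂'}`
corresponding to distinct pairs `(j₁,j₂) ≠ (j₁',j₂')` coincide if and only if
`n₂ − n₁ + m₂ − m₁ = j₂ − j₁' = j₂' − j₁`. -/
theorem bilinear_forms_eigenvalue_coincidence
    (q n1 m1 n2 m2 : ℕ)
    (hq : ∃ p k : ℕ, p.Prime ∧ 0 < k ∧ q = p ^ k)
    (h1 : n1 ≤ m1) (h2 : n2 ≤ m2)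
    (j1 j2 j1' j2' : ℕ)
    (hj1 : j1 ≤ n1) (hj2 : j2 ≤ n2) (hj1' : j1' ≤ n1) (hj2' : j2' ≤ n2)
    (hne : (j1, j2) ≠ (j1', j2'))
    (theta : ℕ → ℕ → ℕ → ℝ)
    (htheta : ∀ n m j, theta n m j =
      (((q : ℝ) ^ (n - j) - 1) * ((q : ℝ) ^ m - (q : ℝ) ^ j)
        - (q : ℝ) ^ j + 1) / ((q : ℝ) - 1)) :
    theta n1 m1 j1 + theta n2 m2 j2 = theta n1 m1 j1' + theta n2 m2 j2' ↔
      ((n2 : ℤ) - n1 + m2 - m1 = (j2 : ℤ) - j1' ∧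
        (j2 : ℤ) - j1' = (j2' : ℤ) - j1) := by
  have hq2 : 2 ≤ q := by
    obtain ⟨p, k, hp, hk, rfl⟩ := hq
    calc 2 ≤ p := hp.two_le
    _ = p ^ 1 := (pow_one p).symm
    _ ≤ p ^ k := Nat.pow_le_pow_right hp.pos hk
  have hQ2 : (2 : ℝ) ≤ (q : ℝ) := by exact_mod_cast hq2
  have hden : (q : ℝ) - 1 ≠ 0 := by
    intro h
    have : (q : ℝ) = 1 := by linarith
    linarith
  -- closed form for theta
  have key : ∀ n m j : ℕ, j ≤ n → theta n m j =
      ((q : ℝ) ^ (n + m - j) - (q : ℝ) ^ n - (q : ℝ) ^ m + 1) / ((q : ℝ) - 1) := by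
    intro n m j hj
    rw [htheta]
    congr 1
    have hm1 : (q : ℝ) ^ (n - j) * (q : ℝ) ^ m = (q : ℝ) ^ (n + m - j) := by
      rw [← pow_add]; congr 1; omega
    have hm2 : (q : ℝ) ^ (n - j) * (q : ℝ) ^ j = (q : ℝ) ^ n := by
      rw [← pow_add]; congr 1; omega
    linear_combination hm1 - hm2
  rw [key n1 m1 j1 hj1, key n2 m2 j2 hj2, key n1 m1 j1' hj1', key n2 m2 j2' hj2',
    ← add_div, ← add_div, div_eq_div_iff hden hden, mul_left_inj' hden]
  have step : ((q : ℝ) ^ (n1 + m1 - j1) - (q : ℝ) ^ n1 - (q : ℝ) ^ m1 + 1 +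
      ((q : ℝ) ^ (n2 + m2 - j2) - (q : ℝ) ^ n2 - (q : ℝ) ^ m2 + 1) =
      (q : ℝ) ^ (n1 + m1 - j1') - (q : ℝ) ^ n1 - (q : ℝ) ^ m1 + 1 +
      ((q : ℝ) ^ (n2 + m2 - j2') - (q : ℝ) ^ n2 - (q : ℝ) ^ m2 + 1)) ↔
      (q : ℝ) ^ (n1 + m1 - j1) + (q : ℝ) ^ (n2 + m2 - j2) =
      (q : ℝ) ^ (n1 + m1 - j1') + (q : ℝ) ^ (n2 + m2 - j2') := by
    constructor <;> intro h <;> linarith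
  rw [step]
  have cast_step : ((q : ℝ) ^ (n1 + m1 - j1) + (q : ℝ) ^ (n2 + m2 - j2) =
      (q : ℝ) ^ (n1 + m1 - j1') + (q : ℝ) ^ (n2 + m2 - j2')) ↔
      (q ^ (n1 + m1 - j1) + q ^ (n2 + m2 - j2) =
      q ^ (n1 + m1 - j1') + q ^ (n2 + m2 - j2')) := by
    constructor <;> intro h <;> exact_mod_cast h
  rw [cast_step, pow_sum_eq_iff hq2]
  have hne' : ¬(j1 = j1' ∧ j2 = j2') := by
    intro ⟨ha, hb⟩; exact hne (by rw [ha, hb])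
  omega
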